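/- Let (X,d,δ) be a strong dilatation structure and define the lack-of-linearity function Lin(x,y,z; ε, μ) = d( δ_ε^x δ_μ^y z , δ_μ^{δ_ε^x y} δ_ε^x z ). Then for any x, y, z ∈ X sufficiently closed, lim_{ε→0} (1/ν(ε)^2) Lin(x, δ_ε^x y, δ_ε^x z; ε, ε) = 0; that is, every strong dilatation structure is infinitesimally linear. -/

import Mathlib

open Metric Set

/-- A dilatation structure `(X,d,δ)` in the sense of Buliga.  `Γ` is a separated
commutative topological group endowed with a continuous morphism `ν : Γ → (0,∞)`
with `inf ν(Γ) = 0`.  For every point `x` and every `ε ∈ Γ` with `ν ε ≤ 1` the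
dilatation `δ ε x` is a homeomorphism from an open neighbourhood `U x` of `x`
onto an open neighbourhood `V ε x` of `x`, subject to the axioms A0–A3. -/
structure DilatationStructure (Γ : Type*) [CommGroup Γ] [TopologicalSpace Γ]
    (X : Type*) [MetricSpace X] where
  /-- the morphism `ν : Γ → (0,∞)` -/
  ν : Γ → ℝ
  ν_pos : ∀ ε, 0 < ν ε
  ν_mul : ∀ ε μ, ν (ε * μ) = ν ε * ν μ
  ν_cont : Continuous ν
  ν_inf : ∀ a : ℝ, 0 < a → ∃ ε, ν ε < a
  /-- the dilatations: `δ ε x y` is `δ_ε^x y` -/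
  δ : Γ → X → X → X
  U : X → Set X
  V : Γ → X → Set X
  W : Γ → X → Set X
  rA : ℝ
  rB : ℝ
  one_lt_rB : 1 < rB
  rB_le_rA : rB ≤ rA
  U_open : ∀ x, IsOpen (U x)
  U_mem : ∀ x, x ∈ U x
  V_open : ∀ ε x, ν ε ≤ 1 → IsOpen (V ε x)
  V_mem : ∀ ε x, ν ε ≤ 1 → x ∈ V ε x
  -- A0
  closedBall_subset_U : ∀ x, closedBall x rA ⊆ U x
  δ_homeo : ∀ ε x, ν ε ≤ 1 →
    ContinuousOn (δ ε x) (U x) ∧ BijOn (δ ε x) (U x) (V ε x) ∧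
      ContinuousOn (δ ε⁻¹ x) (V ε x)
  ball_subset_image : ∀ ε x, ν ε < 1 → ball x (ν ε) ⊆ δ ε x '' ball x rA
  image_subset_V : ∀ ε x, ν ε < 1 → δ ε x '' ball x rA ⊆ V ε x
  V_subset_U : ∀ ε x, ν ε ≤ 1 → V ε x ⊆ U x
  W_nhds : ∀ ε x, 1 < ν ε → W ε x ∈ nhds x
  V_subset_W : ∀ ε x, ν ε < 1 → V ε x ⊆ W ε⁻¹ x
  δ_injOn_W : ∀ ε x, 1 < ν ε → InjOn (δ ε x) (W ε x)
  δ_image_W : ∀ ε x, 1 < ν ε → δ ε x '' W ε x ⊆ ball x rB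
  δ_inv : ∀ ε x, ν ε ≤ 1 → ∀ u ∈ U x, δ ε⁻¹ x (δ ε x u) = u
  domain_tech : ∀ K : Set X, IsCompact K → ∃ R > 0, ∃ ε₀ ∈ Ioo (0:ℝ) 1,
    ∀ x ∈ K, ∀ u ∈ closedBall x R, ∀ v ∈ closedBall x R, ∀ ε : Γ, ν ε < ε₀ →
      δ ε x v ∈ W ε⁻¹ (δ ε x u)
  -- A1
  δ_base : ∀ ε x, ν ε ≤ 1 → δ ε x x = x
  δ_one : ∀ x y, δ 1 x y = y
  δ_cont : ContinuousOn (fun p : Γ × X × X => δ p.1 p.2.1 p.2.2)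
    {p : Γ × X × X | ν p.1 ≤ 1 ∧ p.2.2 ∈ U p.2.1}
  δ_tendsto_zero : ∀ x : X, ∀ y ∈ U x, ∀ η > 0, ∃ θ > 0, ∀ ε : Γ, ν ε < θ →
    dist (δ ε x y) x < η
  -- A2
  δ_comp : ∀ ε μ x, ν ε ≤ 1 → ν μ ≤ 1 → ∀ u ∈ closedBall x rA,
    δ ε x (δ μ x u) = δ (ε * μ) x u
  -- A3 : the limit distances `d^x`
  dx : X → X → X → ℝ
  dx_lim : ∀ K : Set X, IsCompact K → ∀ η > 0, ∃ θ > 0, ∀ ε : Γ, ν ε < θ →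
    ∀ x ∈ K, ∀ u ∈ closedBall x rA, ∀ v ∈ closedBall x rA,
      |(1 / ν ε) * dist (δ ε x u) (δ ε x v) - dx x u v| < η
  dx_nondegenerate : ∀ x : X, ∀ u ∈ closedBall x rA, ∀ v ∈ closedBall x rA,
    dx x u v = 0 → u = v

namespace DilatationStructure

variable {Γ : Type*} [CommGroup Γ] [TopologicalSpace Γ] {X : Type*} [MetricSpace X]

/-- the difference operation `Δ_ε^x(u,v) = δ_{ε⁻¹}^{δ_ε^x u} δ_ε^x v` -/
def difOp (D : DilatationStructure Γ X) (ε : Γ) (x u v : X) : X :=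
  D.δ ε⁻¹ (D.δ ε x u) (D.δ ε x v)

/-- the sum operation `Σ_ε^x(u,v) = δ_{ε⁻¹}^x δ_ε^{δ_ε^x u} v` -/
def sumOp (D : DilatationStructure Γ X) (ε : Γ) (x u v : X) : X :=
  D.δ ε⁻¹ x (D.δ ε (D.δ ε x u) v)

/-- the inverse operation `inv_ε^x(u) = δ_{ε⁻¹}^{δ_ε^x u} x` -/
def invOp (D : DilatationStructure Γ X) (ε : Γ) (x u : X) : X :=
  D.δ ε⁻¹ (D.δ ε x u) x

/-- A dilatation structure is linear if `δ_ε^x δ_μ^y z = δ_μ^{δ_ε^x y} δ_ε^x z`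
for sufficiently closed `x, y, z`. -/
def IsLinear (D : DilatationStructure Γ X) : Prop :=
  ∀ K : Set X, IsCompact K → ∃ C > 0, ∀ ε μ : Γ, D.ν ε ≤ 1 → D.ν μ ≤ 1 →
    ∀ x ∈ K, ∀ y ∈ K, ∀ z ∈ K,
      dist x y ≤ C → dist x z ≤ C → dist y z ≤ C →
        D.δ ε x (D.δ μ y z) = D.δ μ (D.δ ε x y) (D.δ ε x z)

/-- A transformation `A : X → X` is linear (w.r.t. a dilatation structure) if it is
Lipschitz and commutes with dilatations. -/
def IsLinearTransform (D : DilatationStructure Γ X) (A : X → X) : Prop :=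
  (∃ C : NNReal, LipschitzWith C A) ∧
  ∀ x : X, ∀ u ∈ D.U x, ∀ ε : Γ, D.ν ε < 1 → A u ∈ D.U (A x) →
    A (D.δ ε x u) = D.δ ε (A x) (A u)

end DilatationStructure

/-- A strong dilatation structure: a dilatation structure satisfying in addition
axiom A4, the uniform convergence of `Δ_ε^x(u,v)` (hence also of `Σ_ε^x(u,v)` and
`inv_ε^x(u)`) as `ε → 0`. -/
structure StrongDilatationStructure (Γ : Type*) [CommGroup Γ] [TopologicalSpace Γ]
    (X : Type*) [MetricSpace X] extends DilatationStructure Γ X where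
  /-- `Δ^x(u,v)` -/
  difLim : X → X → X → X
  /-- `Σ^x(u,v)` -/
  sumLim : X → X → X → X
  /-- `inv^x(u)` -/
  invLim : X → X → X
  dif_conv : ∀ K : Set X, IsCompact K → ∃ R > 0, ∀ η > 0, ∃ θ > 0, ∀ ε : Γ, ν ε < θ →
    ∀ x ∈ K, ∀ u ∈ closedBall x R, ∀ v ∈ closedBall x R,
      dist (δ ε⁻¹ (δ ε x u) (δ ε x v)) (difLim x u v) < η
  sum_conv : ∀ K : Set X, IsCompact K → ∃ R > 0, ∀ η > 0, ∃ θ > 0, ∀ ε : Γ, ν ε < θ →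
    ∀ x ∈ K, ∀ u ∈ closedBall x R, ∀ v ∈ closedBall x R,
      dist (δ ε⁻¹ x (δ ε (δ ε x u) v)) (sumLim x u v) < η
  inv_conv : ∀ K : Set X, IsCompact K → ∃ R > 0, ∀ η > 0, ∃ θ > 0, ∀ ε : Γ, ν ε < θ →
    ∀ x ∈ K, ∀ u ∈ closedBall x R,
      dist (δ ε⁻¹ (δ ε x u) x) (invLim x u) < η

variable {Γ : Type*} [CommGroup Γ] [TopologicalSpace Γ] {X : Type*} [MetricSpace X]

/-- The quantity `Lin(x,y,z;ε,μ) = d(δ_ε^x δ_μ^y z, δ_μ^{δ_ε^x y} δ_ε^x z)`, measuring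
the lack of linearity of a dilatation structure. -/
def DilatationStructure.lin (D : DilatationStructure Γ X) (x y z : X) (ε μ : Γ) : ℝ :=
  dist (D.δ ε x (D.δ μ y z)) (D.δ μ (D.δ ε x y) (D.δ ε x z))

section InfLinearHelpers

variable {Γ : Type*} [CommGroup Γ] [TopologicalSpace Γ] {X : Type*} [MetricSpace X]

private lemma est_upper {s d q e : ℝ} (hs : 0 < s) (H : |1 / s * d - q| < e) :
    d < s * (q + e) := by
  have h2 : 1 / s * d - q < e := (abs_lt.mp H).2
  have h3 : d / s < q + e := by
    rw [div_eq_inv_mul, ← one_div]; linarith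
  calc d = d / s * s := by field_simp
    _ < (q + e) * s := mul_lt_mul_of_pos_right h3 hs
    _ = s * (q + e) := mul_comm _ _

private lemma est_lower {s d q e : ℝ} (H : |1 / s * d - q| < e) :
    q < 1 / s * d + e := by
  have := (abs_lt.mp H).1; linarith

namespace DilatationStructure

variable (T : DilatationStructure Γ X)

lemma nu_one : T.ν 1 = 1 := by
  have h := T.ν_mul 1 1
  rw [one_mul] at h
  have h2 : T.ν 1 * 1 = T.ν 1 * T.ν 1 := by rw [mul_one]; exact h
  exact (mul_left_cancel₀ (T.ν_pos 1).ne' h2).symm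

lemma nu_inv (ε : Γ) : T.ν ε⁻¹ = (T.ν ε)⁻¹ := by
  have h := T.ν_mul ε⁻¹ ε
  rw [inv_mul_cancel, T.nu_one] at h
  exact eq_inv_of_mul_eq_one_left h.symm

lemma one_lt_nu_inv {ε : Γ} (hε : T.ν ε < 1) : 1 < T.ν ε⁻¹ := by
  have h0 := T.ν_pos ε
  rw [T.nu_inv]
  exact one_lt_inv_iff₀.mpr ⟨h0, hε⟩

lemma rA_pos : 0 < T.rA :=
  lt_trans one_pos (lt_of_lt_of_le T.one_lt_rB T.rB_le_rA)

/-- Key lemma: for `p` in the technical domain `W ε⁻¹ w`, the inverse dilatation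
`δ ε⁻¹ w p` lands in the ball of radius `rB` around `w` and is a genuine preimage. -/
lemma inv_forward {ε : Γ} (hε : T.ν ε < 1) {w p : X} (hp : p ∈ T.W ε⁻¹ w) :
    dist (T.δ ε⁻¹ w p) w < T.rB ∧ T.δ ε w (T.δ ε⁻¹ w p) = p := by
  have h1 : 1 < T.ν ε⁻¹ := T.one_lt_nu_inv hε
  have hB : T.δ ε⁻¹ w p ∈ Metric.ball w T.rB := T.δ_image_W ε⁻¹ w h1 ⟨p, hp, rfl⟩
  have hBd : dist (T.δ ε⁻¹ w p) w < T.rB := Metric.mem_ball.mp hB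
  refine ⟨hBd, ?_⟩
  have hBrA : T.δ ε⁻¹ w p ∈ Metric.ball w T.rA :=
    Metric.mem_ball.mpr (hBd.trans_le T.rB_le_rA)
  have hBU : T.δ ε⁻¹ w p ∈ T.U w :=
    T.closedBall_subset_U w (Metric.ball_subset_closedBall hBrA)
  have hq : T.δ ε w (T.δ ε⁻¹ w p) ∈ T.V ε w :=
    T.image_subset_V ε w hε ⟨_, hBrA, rfl⟩
  have hqW : T.δ ε w (T.δ ε⁻¹ w p) ∈ T.W ε⁻¹ w := T.V_subset_W ε w hε hq
  have hinv : T.δ ε⁻¹ w (T.δ ε w (T.δ ε⁻¹ w p)) = T.δ ε⁻¹ w p :=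
    T.δ_inv ε w hε.le _ hBU
  exact T.δ_injOn_W ε⁻¹ w h1 hqW hp hinv

/-- Joint continuity of dilatations along sequences. -/
lemma tendsto_delta {lam : Γ} (hlam : T.ν lam ≤ 1) {a b : ℕ → X} {p : X}
    (ha : Filter.Tendsto a Filter.atTop (nhds p))
    (hb : Filter.Tendsto b Filter.atTop (nhds p))
    (hU : ∀ᶠ n in Filter.atTop, b n ∈ T.U (a n)) :
    Filter.Tendsto (fun n => T.δ lam (a n) (b n)) Filter.atTop (nhds p) := by
  set S : Set (Γ × X × X) := {q : Γ × X × X | T.ν q.1 ≤ 1 ∧ q.2.2 ∈ T.U q.2.1} with hS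
  have hmem : ((lam, p, p) : Γ × X × X) ∈ S := ⟨hlam, T.U_mem p⟩
  have hcont := T.δ_cont.continuousWithinAt hmem
  have hg : Filter.Tendsto (fun n => ((lam, a n, b n) : Γ × X × X)) Filter.atTop
      (nhdsWithin (lam, p, p) S) := by
    rw [tendsto_nhdsWithin_iff]
    constructor
    · exact tendsto_const_nhds.prodMk_nhds (ha.prodMk_nhds hb)
    · filter_upwards [hU] with n hn
      exact ⟨hlam, hn⟩
  have h2 : Filter.Tendsto (fun n => T.δ lam (a n) (b n)) Filter.atTop
      (nhds (T.δ lam p p)) := hcont.tendsto.comp hg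
  rwa [T.δ_base lam p hlam] at h2

/-- Along sequences converging to a common point inside a compact, `dx (a n) (b n) (a n)`
becomes eventually small. -/
lemma dx_eventually_small {K' : Set X} (hK' : IsCompact K') {a b : ℕ → X} {p : X}
    (haK : ∀ n, a n ∈ K')
    (ha : Filter.Tendsto a Filter.atTop (nhds p))
    (hb : Filter.Tendsto b Filter.atTop (nhds p))
    {s : ℝ} (hs : 0 < s) :
    ∀ᶠ n in Filter.atTop, T.dx (a n) (b n) (a n) < s := by
  have hrA : 0 < T.rA := T.rA_pos
  obtain ⟨θ, hθ, H⟩ := T.dx_lim K' hK' (s / 2) (half_pos hs)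
  obtain ⟨lam, hlam⟩ := T.ν_inf (min θ 1) (lt_min hθ one_pos)
  have hlam1 : T.ν lam ≤ 1 := (hlam.trans_le (min_le_right _ _)).le
  have hlamθ : T.ν lam < θ := hlam.trans_le (min_le_left _ _)
  have hν : 0 < T.ν lam := T.ν_pos lam
  have hdist0 : Filter.Tendsto (fun n => dist (b n) (a n)) Filter.atTop (nhds 0) := by
    have := hb.dist ha; simpa using this
  have hUb : ∀ᶠ n in Filter.atTop, b n ∈ T.U (a n) := by
    filter_upwards [hdist0.eventually (gt_mem_nhds hrA)] with n hn
    exact T.closedBall_subset_U (a n) (Metric.mem_closedBall.mpr hn.le)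
  have hδ : Filter.Tendsto (fun n => T.δ lam (a n) (b n)) Filter.atTop (nhds p) :=
    T.tendsto_delta hlam1 ha hb hUb
  have hd2 : Filter.Tendsto (fun n => dist (T.δ lam (a n) (b n)) (a n))
      Filter.atTop (nhds 0) := by
    have := hδ.dist ha; simpa using this
  filter_upwards [hd2.eventually (gt_mem_nhds (by positivity : (0:ℝ) < T.ν lam * (s / 2))),
      hdist0.eventually (gt_mem_nhds hrA)] with n h1 h2
  have hball : b n ∈ Metric.closedBall (a n) T.rA := Metric.mem_closedBall.mpr h2.le
  have hself : a n ∈ Metric.closedBall (a n) T.rA := Metric.mem_closedBall_self hrA.le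
  have Habs := H lam hlamθ (a n) (haK n) (b n) hball (a n) hself
  rw [T.δ_base lam (a n) hlam1] at Habs
  have hlow := est_lower Habs
  have h4 : 1 / T.ν lam * dist (T.δ lam (a n) (b n)) (a n) < s / 2 := by
    rw [one_div, ← div_eq_inv_mul, div_lt_iff₀ hν]
    linarith [h1]
  linarith

set_option maxHeartbeats 1000000 in
/-- The main quantitative estimate, with all the identifications supplied as hypotheses. -/
lemma final_calc {Kst : Set X} {θ1 η₁ η : ℝ}
    {x y z u v w h' A B : X} {ε : Γ}
    (Hdx : ∀ ε1 : Γ, T.ν ε1 < θ1 → ∀ b ∈ Kst, ∀ p ∈ Metric.closedBall b T.rA,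
      ∀ q ∈ Metric.closedBall b T.rA,
      |(1 / T.ν ε1) * dist (T.δ ε1 b p) (T.δ ε1 b q) - T.dx b p q| < η₁)
    (hxK : x ∈ Kst) (huK : u ∈ Kst) (hwK : w ∈ Kst)
    (hyb : y ∈ Metric.closedBall x T.rA) (hzb : z ∈ Metric.closedBall x T.rA)
    (ht1 : T.ν ε < 1) (htθ : T.ν ε < θ1) (httθ : T.ν (ε * ε) < θ1)
    (hu : T.δ ε x y = u)
    (hw : T.δ (ε * ε) x y = w) (hh' : T.δ (ε * ε) x z = h')
    (huw : T.δ ε x u = w) (hvh : T.δ ε x v = h')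
    (hvu : v ∈ Metric.closedBall u T.rA)
    (hAb : A ∈ Metric.closedBall x T.rA) (hAeq : T.δ ε x A = T.δ ε u v)
    (hP1 : T.δ ε x (T.δ ε u v) = T.δ (ε * ε) x A)
    (hBb : B ∈ Metric.closedBall w T.rA) (hBfwd : T.δ ε w B = h')
    (hP2 : T.δ ε w h' = T.δ (ε * ε) w B)
    (hdxuvu : T.dx u v u < η / 8) (hη₁b : η₁ ≤ η / 8) (hη₁1 : η₁ ≤ 1)
    (hmul : T.ν ε * (|T.dx x z y| + 1) < η / 8) (hη : 0 < η) :
    1 / T.ν ε ^ 2 * T.lin x u v ε ε < η := by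
  have hrA0 : 0 ≤ T.rA := T.rA_pos.le
  have ht0 : 0 < T.ν ε := T.ν_pos ε
  have hνt0 : 0 < T.ν (ε * ε) := T.ν_pos _
  have hνtt : T.ν (ε * ε) = T.ν ε * T.ν ε := T.ν_mul ε ε
  have htt1 : T.ν (ε * ε) ≤ 1 := by rw [hνtt]; nlinarith
  -- estimate `dist (δ ε u v) u`
  have H1 := Hdx ε htθ u huK v hvu u (Metric.mem_closedBall_self hrA0)
  rw [T.δ_base ε u ht1.le] at H1
  have hA'u : dist (T.δ ε u v) u < T.ν ε * (T.dx u v u + η₁) := est_upper ht0 H1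
  -- T1 : dx x A y
  have H2 := Hdx ε htθ x hxK A hAb y hyb
  rw [hAeq, hu] at H2
  have hT1 : T.dx x A y < T.dx u v u + 2 * η₁ := by
    have hlow := est_lower H2
    have hmid : 1 / T.ν ε * dist (T.δ ε u v) u < T.dx u v u + η₁ := by
      rw [one_div, ← div_eq_inv_mul, div_lt_iff₀ ht0]
      linarith [hA'u]
    linarith
  -- dist h' w
  have H3 := Hdx (ε * ε) httθ x hxK z hzb y hyb
  rw [hh', hw] at H3
  have hh'w : dist h' w < T.ν (ε * ε) * (T.dx x z y + η₁) := est_upper hνt0 H3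
  -- T2 : dx w B w
  have H4 := Hdx ε htθ w hwK B hBb w (Metric.mem_closedBall_self hrA0)
  rw [T.δ_base ε w ht1.le, hBfwd] at H4
  have hT2 : T.dx w B w < T.ν ε * (|T.dx x z y| + 1) + η₁ := by
    have hlow := est_lower H4
    have hmid : 1 / T.ν ε * dist h' w < T.ν ε * (|T.dx x z y| + 1) := by
      rw [one_div, ← div_eq_inv_mul, div_lt_iff₀ ht0]
      have h5 : T.ν (ε * ε) * (T.dx x z y + η₁) ≤ T.ν (ε * ε) * (|T.dx x z y| + 1) :=
        mul_le_mul_of_nonneg_left (by linarith [le_abs_self (T.dx x z y)]) hνt0.le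
      have h6 : T.ν (ε * ε) * (|T.dx x z y| + 1)
          = T.ν ε * (|T.dx x z y| + 1) * T.ν ε := by rw [hνtt]; ring
      linarith [hh'w]
    linarith
  -- final distance comparisons at scale ε*ε
  have H5 := Hdx (ε * ε) httθ x hxK A hAb y hyb
  rw [hw] at H5
  have hb1 : dist (T.δ (ε * ε) x A) w < T.ν (ε * ε) * (T.dx x A y + η₁) :=
    est_upper hνt0 H5
  have H6 := Hdx (ε * ε) httθ w hwK B hBb w (Metric.mem_closedBall_self hrA0)
  rw [T.δ_base (ε * ε) w htt1] at H6
  have hb2 : dist (T.δ (ε * ε) w B) w < T.ν (ε * ε) * (T.dx w B w + η₁) :=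
    est_upper hνt0 H6
  have hlin : T.lin x u v ε ε = dist (T.δ (ε * ε) x A) (T.δ (ε * ε) w B) := by
    simp only [DilatationStructure.lin]
    rw [hP1, huw, hvh, hP2]
  rw [hlin]
  have htri : dist (T.δ (ε * ε) x A) (T.δ (ε * ε) w B)
      ≤ dist (T.δ (ε * ε) x A) w + dist (T.δ (ε * ε) w B) w := dist_triangle_right _ _ _
  have hc1 : T.ν (ε * ε) * (T.dx x A y + η₁) ≤ T.ν (ε * ε) * (4 * (η / 8)) :=
    mul_le_mul_of_nonneg_left (by linarith) hνt0.le
  have hc2 : T.ν (ε * ε) * (T.dx w B w + η₁) ≤ T.ν (ε * ε) * (3 * (η / 8)) :=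
    mul_le_mul_of_nonneg_left (by linarith) hνt0.le
  have htot : dist (T.δ (ε * ε) x A) (T.δ (ε * ε) w B) < T.ν (ε * ε) * (7 * (η / 8)) := by
    nlinarith [htri, hb1, hb2, hc1, hc2]
  have hsq : T.ν ε ^ 2 = T.ν (ε * ε) := by rw [sq, hνtt]
  rw [hsq, one_div, ← div_eq_inv_mul, div_lt_iff₀ hνt0]
  nlinarith [htot, mul_pos hνt0 hη]

end DilatationStructure

end InfLinearHelpers

set_option maxHeartbeats 1000000 in
/-- **Theorem.**  Every strong dilatation structure is infinitesimally linear: for any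
`x, y, z` sufficiently closed, `lim_{ε→0} (1/ν ε ^ 2) Lin(x, δ_ε^x y, δ_ε^x z; ε, ε) = 0`. -/
theorem infinitesimally_linear (D : StrongDilatationStructure Γ X) :
    ∀ K : Set X, IsCompact K → ∃ C > 0, ∀ x ∈ K, ∀ y ∈ K, ∀ z ∈ K,
      dist x y ≤ C → dist x z ≤ C → dist y z ≤ C →
        ∀ η > 0, ∃ θ > 0, ∀ ε : Γ, D.ν ε < θ →
          (1 / (D.ν ε) ^ 2) *
            D.toDilatationStructure.lin x (D.δ ε x y) (D.δ ε x z) ε ε < η := by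
  intro K hK
  set T := D.toDilatationStructure with hT
  have hrA : 0 < T.rA := T.rA_pos
  -- Choice of the closeness constant C
  have hCex : ∃ C, 0 < C ∧ C ≤ T.rA ∧
      ∀ x' ∈ K, ∀ y', dist x' y' ≤ C → T.dx x' y' x' < 1 / 2 := by
    by_contra hc
    push_neg at hc
    choose xs hxsK ys hdys hdxge using fun n : ℕ =>
      hc (min T.rA (1 / ((n : ℝ) + 1))) (lt_min hrA (by positivity)) (min_le_left _ _)
    obtain ⟨p, hpK, φ, hφmono, hφtend⟩ := hK.tendsto_subseq hxsK
    have hys_tend : Filter.Tendsto (fun n => ys (φ n)) Filter.atTop (nhds p) := by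
      rw [tendsto_iff_dist_tendsto_zero]
      apply squeeze_zero (fun n => dist_nonneg)
        (g := fun n : ℕ => 1 / ((n : ℝ) + 1) + dist (xs (φ n)) p)
      · intro n
        have h1 : dist (ys (φ n)) p ≤ dist (ys (φ n)) (xs (φ n)) + dist (xs (φ n)) p :=
          dist_triangle _ _ _
        have h2 : dist (ys (φ n)) (xs (φ n)) ≤ min T.rA (1 / ((φ n : ℝ) + 1)) := by
          rw [dist_comm]; exact hdys (φ n)
        have h3 : min T.rA (1 / ((φ n : ℝ) + 1)) ≤ 1 / ((φ n : ℝ) + 1) := min_le_right _ _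
        have h4 : (1 : ℝ) / ((φ n : ℝ) + 1) ≤ 1 / ((n : ℝ) + 1) := by
          apply one_div_le_one_div_of_le (by positivity)
          have h5 : (n : ℝ) ≤ (φ n : ℝ) := Nat.cast_le.mpr hφmono.le_apply
          linarith
        linarith
      · have h6 : Filter.Tendsto (fun n => dist (xs (φ n)) p) Filter.atTop (nhds 0) :=
          tendsto_iff_dist_tendsto_zero.mp hφtend
        simpa using tendsto_one_div_add_atTop_nhds_zero_nat.add h6
    have hsmall := T.dx_eventually_small hK (fun n => hxsK (φ n)) hφtend hys_tend
      (by norm_num : (0:ℝ) < 1 / 2)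
    obtain ⟨n, hn⟩ := hsmall.exists
    exact absurd hn (not_lt.mpr (hdxge (φ n)))
  obtain ⟨C, hC0, hCrA, hCdx⟩ := hCex
  refine ⟨C, hC0, ?_⟩
  intro x hx y hy z hz hxy hxz hyz η hη
  by_contra hcon
  push_neg at hcon
  choose e he1 he2 using fun n : ℕ => hcon (1 / ((n : ℝ) + 1)) (by positivity)
  -- basic facts about y, z
  have hyx : dist y x ≤ T.rA := by rw [dist_comm]; exact hxy.trans hCrA
  have hzx : dist z x ≤ T.rA := by rw [dist_comm]; exact hxz.trans hCrA
  have hyb : y ∈ closedBall x T.rA := mem_closedBall.mpr hyx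
  have hzb : z ∈ closedBall x T.rA := mem_closedBall.mpr hzx
  have hyU : y ∈ T.U x := T.closedBall_subset_U x hyb
  have ht0 : ∀ n : ℕ, 0 < T.ν (e n) := fun n => T.ν_pos _
  have ht1 : ∀ n : ℕ, T.ν (e n) < 1 := by
    intro n
    have h := he1 n
    have h2 : (1 : ℝ) / ((n : ℝ) + 1) ≤ 1 := by
      rw [div_le_one (by positivity)]
      have : (0:ℝ) ≤ (n : ℝ) := Nat.cast_nonneg n
      linarith
    linarith
  have h_t : Filter.Tendsto (fun n => T.ν (e n)) Filter.atTop (nhds 0) :=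
    squeeze_zero (fun n => (ht0 n).le) (fun n => (he1 n).le)
      tendsto_one_div_add_atTop_nhds_zero_nat
  -- the sequences of points
  have hu_tend : Filter.Tendsto (fun n => T.δ (e n) x y) Filter.atTop (nhds x) := by
    rw [Metric.tendsto_atTop]
    intro s hs
    obtain ⟨θ, hθ, H⟩ := T.δ_tendsto_zero x y hyU s hs
    obtain ⟨N, hN⟩ := Filter.eventually_atTop.mp (h_t.eventually (gt_mem_nhds hθ))
    exact ⟨N, fun n hn => H (e n) (hN n hn)⟩
  have hv_tend : Filter.Tendsto (fun n => T.δ (e n) x z) Filter.atTop (nhds x) := by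
    rw [Metric.tendsto_atTop]
    intro s hs
    obtain ⟨θ, hθ, H⟩ := T.δ_tendsto_zero x z (T.closedBall_subset_U x hzb) s hs
    obtain ⟨N, hN⟩ := Filter.eventually_atTop.mp (h_t.eventually (gt_mem_nhds hθ))
    exact ⟨N, fun n hn => H (e n) (hN n hn)⟩
  have hw_tend : Filter.Tendsto (fun n => T.δ (e n * e n) x y) Filter.atTop (nhds x) := by
    rw [Metric.tendsto_atTop]
    intro s hs
    obtain ⟨θ, hθ, H⟩ := T.δ_tendsto_zero x y hyU s hs
    obtain ⟨N, hN⟩ := Filter.eventually_atTop.mp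
      (h_t.eventually (gt_mem_nhds (lt_min hθ one_pos)))
    refine ⟨N, fun n hn => H (e n * e n) ?_⟩
    have h1 := hN n hn
    have h2 : T.ν (e n) < θ := h1.trans_le (min_le_left _ _)
    have h3 : T.ν (e n) < 1 := h1.trans_le (min_le_right _ _)
    have h4 := T.ν_pos (e n)
    rw [T.ν_mul]
    nlinarith
  -- the compact set containing all base points
  set Kst : Set X := (K ∪ insert x (Set.range (fun n => T.δ (e n) x y))) ∪
      insert x (Set.range (fun n => T.δ (e n * e n) x y)) with hKstdef
  have hKst : IsCompact Kst :=
    (hK.union hu_tend.isCompact_insert_range).union hw_tend.isCompact_insert_range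
  have hxK : x ∈ Kst := Set.mem_union_left _ (Set.mem_union_left _ hx)
  have huK : ∀ n : ℕ, T.δ (e n) x y ∈ Kst := fun n =>
    Set.mem_union_left _ (Set.mem_union_right _ (Set.mem_insert_iff.mpr (Or.inr ⟨n, rfl⟩)))
  have hwK : ∀ n : ℕ, T.δ (e n * e n) x y ∈ Kst := fun n =>
    Set.mem_union_right _ (Set.mem_insert_iff.mpr (Or.inr ⟨n, rfl⟩))
  -- domain technology and uniform dx convergence on Kst
  obtain ⟨R₀, hR₀, ε₀, hε₀, hdt⟩ := T.domain_tech K hK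
  set η₁ : ℝ := min (1 / 16) (η / 8) with hη₁def
  have hη₁pos : 0 < η₁ := lt_min (by norm_num) (by positivity)
  have hη₁a : η₁ ≤ 1 / 16 := min_le_left _ _
  have hη₁b : η₁ ≤ η / 8 := min_le_right _ _
  obtain ⟨θ1, hθ1, Hdx⟩ := T.dx_lim Kst hKst η₁ hη₁pos
  -- the eventual conditions
  have Ev1 : ∀ᶠ n in Filter.atTop, T.ν (e n) < θ1 := h_t.eventually (gt_mem_nhds hθ1)
  have Ev2 : ∀ᶠ n in Filter.atTop, T.ν (e n) < ε₀ := h_t.eventually (gt_mem_nhds hε₀.1)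
  have Ev3 : ∀ᶠ n in Filter.atTop, dist (T.δ (e n) x y) x < min R₀ (T.rA / 2) :=
    (tendsto_iff_dist_tendsto_zero.mp hu_tend).eventually
      (gt_mem_nhds (lt_min hR₀ (by positivity)))
  have Ev4 : ∀ᶠ n in Filter.atTop, dist (T.δ (e n) x z) x < min R₀ (T.rA / 2) :=
    (tendsto_iff_dist_tendsto_zero.mp hv_tend).eventually
      (gt_mem_nhds (lt_min hR₀ (by positivity)))
  have Ev5 : ∀ᶠ n in Filter.atTop,
      T.dx (T.δ (e n) x y) (T.δ (e n) x z) (T.δ (e n) x y) < min (1 / 4) (η / 8) :=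
    T.dx_eventually_small hKst huK hu_tend hv_tend (lt_min (by norm_num) (by positivity))
  have Ev6 : ∀ᶠ n in Filter.atTop, T.ν (e n) * (|T.dx x z y| + 1) < η / 8 := by
    have h7 : Filter.Tendsto (fun n => T.ν (e n) * (|T.dx x z y| + 1))
        Filter.atTop (nhds 0) := by
      simpa using h_t.mul_const (|T.dx x z y| + 1)
    exact h7.eventually (gt_mem_nhds (by positivity))
  obtain ⟨n, hn1, hn2, hn3, hn4, hn5, hn6⟩ :=
    (Ev1.and (Ev2.and (Ev3.and (Ev4.and (Ev5.and Ev6))))).exists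
  -- memberships
  have huxR : T.δ (e n) x y ∈ closedBall x R₀ :=
    mem_closedBall.mpr (hn3.le.trans (min_le_left _ _))
  have hvxR : T.δ (e n) x z ∈ closedBall x R₀ :=
    mem_closedBall.mpr (hn4.le.trans (min_le_left _ _))
  have hux2 : dist (T.δ (e n) x y) x ≤ T.rA / 2 := hn3.le.trans (min_le_right _ _)
  have hvx2 : dist (T.δ (e n) x z) x ≤ T.rA / 2 := hn4.le.trans (min_le_right _ _)
  have hvu : T.δ (e n) x z ∈ closedBall (T.δ (e n) x y) T.rA := by
    rw [mem_closedBall]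
    calc dist (T.δ (e n) x z) (T.δ (e n) x y)
        ≤ dist (T.δ (e n) x z) x + dist x (T.δ (e n) x y) := dist_triangle _ _ _
      _ = dist (T.δ (e n) x z) x + dist (T.δ (e n) x y) x := by rw [dist_comm x]
      _ ≤ T.rA / 2 + T.rA / 2 := add_le_add hvx2 hux2
      _ = T.rA := by ring
  -- composition identities
  have huw : T.δ (e n) x (T.δ (e n) x y) = T.δ (e n * e n) x y :=
    T.δ_comp (e n) (e n) x (ht1 n).le (ht1 n).le y hyb
  have hvh : T.δ (e n) x (T.δ (e n) x z) = T.δ (e n * e n) x z :=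
    T.δ_comp (e n) (e n) x (ht1 n).le (ht1 n).le z hzb
  -- the point B via the W-machinery
  have hWm : T.δ (e n * e n) x z ∈ T.W (e n)⁻¹ (T.δ (e n * e n) x y) := by
    have h := hdt x hx (T.δ (e n) x y) huxR (T.δ (e n) x z) hvxR (e n) hn2
    rwa [huw, hvh] at h
  obtain ⟨hBw, hBfwd⟩ := T.inv_forward (ht1 n) hWm
  have hBb : T.δ (e n)⁻¹ (T.δ (e n * e n) x y) (T.δ (e n * e n) x z)
      ∈ closedBall (T.δ (e n * e n) x y) T.rA :=
    mem_closedBall.mpr (hBw.le.trans T.rB_le_rA)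
  have hP2 : T.δ (e n) (T.δ (e n * e n) x y) (T.δ (e n * e n) x z)
      = T.δ (e n * e n) (T.δ (e n * e n) x y)
        (T.δ (e n)⁻¹ (T.δ (e n * e n) x y) (T.δ (e n * e n) x z)) := by
    have h := T.δ_comp (e n) (e n) (T.δ (e n * e n) x y) (ht1 n).le (ht1 n).le _ hBb
    rwa [hBfwd] at h
  -- the point A via the metric estimate
  have hA'u : dist (T.δ (e n) (T.δ (e n) x y) (T.δ (e n) x z)) (T.δ (e n) x y)
      < T.ν (e n) * (T.dx (T.δ (e n) x y) (T.δ (e n) x z) (T.δ (e n) x y) + η₁) := by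
    have H := Hdx (e n) hn1 (T.δ (e n) x y) (huK n) (T.δ (e n) x z) hvu
      (T.δ (e n) x y) (mem_closedBall_self hrA.le)
    rw [T.δ_base (e n) (T.δ (e n) x y) (ht1 n).le] at H
    exact est_upper (ht0 n) H
  have hux : dist (T.δ (e n) x y) x < T.ν (e n) * (T.dx x y x + η₁) := by
    have H := Hdx (e n) hn1 x hxK y hyb x (mem_closedBall_self hrA.le)
    rw [T.δ_base (e n) x (ht1 n).le] at H
    exact est_upper (ht0 n) H
  have hdxyx : T.dx x y x < 1 / 2 := hCdx x hx y hxy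
  have hdxuvu4 : T.dx (T.δ (e n) x y) (T.δ (e n) x z) (T.δ (e n) x y) < 1 / 4 :=
    hn5.trans_le (min_le_left _ _)
  have hE1 : dist (T.δ (e n) (T.δ (e n) x y) (T.δ (e n) x z)) x < T.ν (e n) := by
    have htri := dist_triangle (T.δ (e n) (T.δ (e n) x y) (T.δ (e n) x z))
      (T.δ (e n) x y) x
    have hb1 : T.ν (e n) * (T.dx (T.δ (e n) x y) (T.δ (e n) x z) (T.δ (e n) x y) + η₁)
        ≤ T.ν (e n) * (1 / 4 + 1 / 16) :=
      mul_le_mul_of_nonneg_left (by linarith) (ht0 n).le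
    have hb2 : T.ν (e n) * (T.dx x y x + η₁) ≤ T.ν (e n) * (1 / 2 + 1 / 16) :=
      mul_le_mul_of_nonneg_left (by linarith) (ht0 n).le
    have hpos := ht0 n
    linarith
  obtain ⟨A, hAball, hAeq⟩ := T.ball_subset_image (e n) x (ht1 n) (mem_ball.mpr hE1)
  have hAb : A ∈ closedBall x T.rA := ball_subset_closedBall hAball
  have hP1 : T.δ (e n) x (T.δ (e n) (T.δ (e n) x y) (T.δ (e n) x z))
      = T.δ (e n * e n) x A := by
    rw [← hAeq]
    exact T.δ_comp (e n) (e n) x (ht1 n).le (ht1 n).le A (ball_subset_closedBall hAball)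
  -- conclude via the final calculation
  have httθ : T.ν (e n * e n) < θ1 := by
    have h4 := ht0 n
    have h5 := ht1 n
    rw [T.ν_mul]
    nlinarith [hn1]
  have hdxuvu8 : T.dx (T.δ (e n) x y) (T.δ (e n) x z) (T.δ (e n) x y) < η / 8 :=
    hn5.trans_le (min_le_right _ _)
  have hF := T.final_calc Hdx hxK (huK n) (hwK n) hyb hzb (ht1 n) hn1 httθ rfl rfl rfl
    huw hvh hvu hAb hAeq hP1 hBb hBfwd hP2 hdxuvu8 hη₁b (hη₁a.trans (by norm_num)) hn6 hη
  exact absurd (he2 n) (not_le.mpr hF)
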